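/- (Explicit formula for the transition coefficients) For every ρ ∈ (−1,1) and all integers n ≥ 2 and k ≥ −1: μ_{nk}(ρ) = Σ_{ℓ=3}^{min(n+1, k+1)} (−1)^{k+1+ℓ} · C(n−2, ℓ−3) · C(k+1, ℓ) · ρ^{n+k+2−2ℓ} · (1−ρ²)^{ℓ−1}, where C(r,s) denotes the binomial coefficient (with C(r,s) = 0 if s < 0 or s > r), and the sum is empty (hence μ_{nk}(ρ) = 0) when min(n+1, k+1) < 3. -/

import Mathlib

/-- The transition coefficients
`μ_{nk}(ρ) = (1−ρ²)² (1/(2πi)) ∮_{|z|=1} (1+ρz)^{n−2} (z+ρ)^{−(n+2)} z^{k+1} dz`. -/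
noncomputable def muCoef (ρ : ℝ) (n k : ℤ) : ℂ :=
  (1 - (ρ : ℂ) ^ 2) ^ 2 * (1 / (2 * Real.pi * Complex.I)) *
    ∮ z in C(0, 1), (1 + (ρ : ℂ) * z) ^ (n - 2) * (z + (ρ : ℂ)) ^ (-(n + 2)) * z ^ (k + 1)

lemma circleIntegral_finset_sum {ι : Type*} (s : Finset ι) (f : ι → ℂ → ℂ) (c : ℂ) (R : ℝ)
    (h : ∀ i ∈ s, CircleIntegrable (f i) c R) :
    (∮ z in C(c, R), ∑ i ∈ s, f i z) = ∑ i ∈ s, ∮ z in C(c, R), f i z := by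
  simp only [circleIntegral, Finset.smul_sum]
  exact intervalIntegral.integral_finset_sum fun i hi => (h i hi).out

lemma circleIntegrable_const_mul {f : ℂ → ℂ} {c : ℂ} {R : ℝ} (a : ℂ)
    (h : CircleIntegrable f c R) : CircleIntegrable (fun z => a * f z) c R :=
  IntervalIntegrable.const_mul h a

lemma circleIntegral_zpow_key {w : ℂ} (hw : ‖w‖ < 1) (m : ℤ) :
    (∮ z in C((0 : ℂ), 1), (z - w) ^ m) =
      if m = -1 then 2 * Real.pi * Complex.I else 0 := by
  split_ifs with h
  · subst h
    have : w ∈ Metric.ball (0 : ℂ) 1 := by simpa using hw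
    simpa [zpow_neg, zpow_one] using circleIntegral.integral_sub_inv_of_mem_ball this
  · exact circleIntegral.integral_sub_zpow_of_ne h _ _ _

/-- Explicit formula: for `n ≥ 2`, `k ≥ −1`,
`μ_{nk}(ρ) = Σ_{ℓ=3}^{min(n+1,k+1)} (−1)^{k+1+ℓ} C(n−2,ℓ−3) C(k+1,ℓ) ρ^{n+k+2−2ℓ} (1−ρ²)^{ℓ−1}`
(the sum being empty when `min(n+1,k+1) < 3`). -/
theorem muCoef_explicit (ρ : ℝ) (hρ : ρ ∈ Set.Ioo (-1 : ℝ) 1) (n k : ℤ)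
    (hn : 2 ≤ n) (hk : -1 ≤ k) :
    muCoef ρ n k = ∑ ℓ ∈ Finset.Icc (3 : ℤ) (min (n + 1) (k + 1)),
      (-1 : ℂ) ^ (k + 1 + ℓ) *
        ((n - 2).toNat.choose (ℓ - 3).toNat : ℂ) *
        ((k + 1).toNat.choose ℓ.toNat : ℂ) *
        (ρ : ℂ) ^ (n + k + 2 - 2 * ℓ) *
        (1 - (ρ : ℂ) ^ 2) ^ (ℓ - 1) := by
  obtain ⟨h1, h2⟩ := hρ
  set c : ℂ := (ρ : ℂ) with hcdef
  have hc : ‖c‖ < 1 := by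
    rw [hcdef, Complex.norm_real, Real.norm_eq_abs]
    exact abs_lt.2 ⟨h1, h2⟩
  have hcneg : ‖-c‖ < 1 := by simpa using hc
  set N := (n - 2).toNat with hN
  set K := (k + 1).toNat with hK
  have hnN : (N : ℤ) = n - 2 := Int.toNat_of_nonneg (by omega)
  have hkK : (K : ℤ) = k + 1 := Int.toNat_of_nonneg (by omega)
  -- the coefficient function
  set A : ℕ → ℕ → ℂ := fun i j =>
    (N.choose i : ℂ) * (K.choose j : ℂ) * (1 - c ^ 2) ^ (N - i) * c ^ i * (-c) ^ (K - j)
    with hA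
  set S : Finset (ℕ × ℕ) := Finset.range (N + 1) ×ˢ Finset.range (K + 1) with hS
  -- pointwise expansion of the integrand on the circle
  have hexp : Set.EqOn
      (fun z : ℂ => (1 + c * z) ^ (n - 2) * (z + c) ^ (-(n + 2)) * z ^ (k + 1))
      (fun z : ℂ => ∑ p ∈ S, A p.1 p.2 * (z - (-c)) ^ ((p.1 : ℤ) + p.2 - (n + 2)))
      (Metric.sphere (0 : ℂ) 1) := by
    intro z hz
    have hzabs : ‖z‖ = 1 := by simpa using hz
    have hu : z + c ≠ 0 := by
      intro h
      have : z = -c := by linear_combination h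
      rw [this] at hzabs
      rw [hzabs] at hcneg
      exact lt_irrefl _ hcneg
    have e1 : (1 + c * z) ^ (n - 2) = (c * (z + c) + (1 - c ^ 2)) ^ N := by
      rw [show n - 2 = (N : ℤ) by omega, zpow_natCast]
      ring_nf
    have e2 : z ^ (k + 1) = ((z + c) + (-c)) ^ K := by
      rw [show k + 1 = (K : ℤ) by omega, zpow_natCast]
      ring_nf
    simp only
    rw [e1, e2, add_pow, add_pow, Finset.sum_mul, Finset.sum_mul_sum, ← Finset.sum_product']
    apply Finset.sum_congr rfl
    rintro ⟨i, j⟩ hp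
    simp only [hA]
    have hzc : z - (-c) = z + c := by ring
    rw [hzc]
    rw [show ((i : ℤ) + j - (n + 2)) = (i : ℤ) + (-(n+2) + j) by ring,
      zpow_add₀ hu, zpow_add₀ hu, zpow_natCast, zpow_natCast, mul_pow]
    ring
  -- compute the integral
  have hint : (∮ z in C((0 : ℂ), 1),
      (1 + c * z) ^ (n - 2) * (z + c) ^ (-(n + 2)) * z ^ (k + 1))
      = ∑ p ∈ S, A p.1 p.2 *
          (if ((p.1 : ℤ) + p.2 - (n + 2)) = -1 then 2 * Real.pi * Complex.I else 0) := by
    rw [circleIntegral.integral_congr (by norm_num) hexp]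
    rw [circleIntegral_finset_sum]
    · refine Finset.sum_congr rfl fun p _ => ?_
      rw [circleIntegral.integral_const_mul, circleIntegral_zpow_key hcneg]
    · intro p _
      apply circleIntegrable_const_mul
      refine circleIntegrable_sub_zpow_iff.2 (Or.inr (Or.inr ?_))
      intro h
      have : ‖-c‖ = 1 := by
        have := Metric.mem_sphere.1 h
        simpa using this
      rw [this] at hcneg
      exact lt_irrefl _ hcneg
  have hπ : (2 * (Real.pi : ℂ) * Complex.I) ≠ 0 := by
    simp [Real.pi_ne_zero, Complex.I_ne_zero]
  rw [muCoef, ← hcdef, hint, Finset.mul_sum]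
  -- turn each summand into an `if` over the diagonal condition
  have hterm : ∀ p ∈ S,
      (1 - c ^ 2) ^ 2 * (1 / (2 * (Real.pi : ℂ) * Complex.I)) *
        (A p.1 p.2 * (if ((p.1 : ℤ) + p.2 - (n + 2)) = -1
          then 2 * (Real.pi : ℂ) * Complex.I else 0))
      = if ((p.1 : ℤ) + p.2 - (n + 2)) = -1 then (1 - c ^ 2) ^ 2 * A p.1 p.2 else 0 := by
    intro p _
    split_ifs with h
    · field_simp
    · ring
  rw [Finset.sum_congr rfl hterm, ← Finset.sum_filter]
  -- reindex the filtered sum by `ℓ = p.2`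
  refine Finset.sum_nbij' (fun p => (p.2 : ℤ)) (fun ℓ => ((n + 1 - ℓ).toNat, ℓ.toNat))
    ?_ ?_ ?_ ?_ ?_
  · rintro ⟨i, j⟩ hp
    simp only [Finset.mem_filter, hS, Finset.mem_product, Finset.mem_range] at hp
    obtain ⟨⟨hi, hj⟩, hsum⟩ := hp
    simp only [Finset.mem_Icc, le_min_iff]
    omega
  · intro ℓ hℓ
    simp only [Finset.mem_Icc, le_min_iff] at hℓ
    simp only [Finset.mem_filter, hS, Finset.mem_product, Finset.mem_range]
    omega
  · rintro ⟨i, j⟩ hp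
    simp only [Finset.mem_filter, hS, Finset.mem_product, Finset.mem_range] at hp
    obtain ⟨⟨hi, hj⟩, hsum⟩ := hp
    have : (n + 1 - (j : ℤ)).toNat = i := by omega
    simp [this]
  · intro ℓ hℓ
    simp only [Finset.mem_Icc, le_min_iff] at hℓ
    show ((ℓ.toNat : ℕ) : ℤ) = ℓ
    omega
  · rintro ⟨i, j⟩ hp
    simp only [Finset.mem_filter, hS, Finset.mem_product, Finset.mem_range] at hp
    obtain ⟨⟨hi, hj⟩, hsum⟩ := hp
    simp only
    -- basic arithmetic facts
    have hiN : i ≤ N := by omega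
    have hjK : j ≤ K := by omega
    have hj3 : 3 ≤ j := by omega
    have hNi : N - i = j - 3 := by omega
    have e0 : ((j : ℤ) - 3).toNat = j - 3 := by omega
    have e1 : ((j : ℕ) : ℤ).toNat = j := by omega
    have echoose : (N.choose i : ℂ) = (N.choose (j - 3) : ℂ) := by
      rw [← Nat.choose_symm hiN, hNi]
    have esign : (-1 : ℂ) ^ (k + 1 + (j : ℤ)) = (-1 : ℂ) ^ (K - j) := by
      have h2 : k + 1 + (j : ℤ) = ((K - j : ℕ) : ℤ) + 2 * (j : ℤ) := by omega
      rw [h2, zpow_add₀ (by norm_num : (-1 : ℂ) ≠ 0), zpow_natCast, zpow_mul]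
      norm_num [one_zpow]
    have epow : (c : ℂ) ^ (n + k + 2 - 2 * (j : ℤ)) = c ^ (i + (K - j)) := by
      rw [show n + k + 2 - 2 * (j : ℤ) = ((i + (K - j) : ℕ) : ℤ) by omega, zpow_natCast]
    have eone : (1 - c ^ 2) ^ ((j : ℤ) - 1) = (1 - c ^ 2) ^ (2 + (N - i)) := by
      rw [show (j : ℤ) - 1 = ((2 + (N - i) : ℕ) : ℤ) by omega, zpow_natCast]
    simp only [hA]
    rw [e0, e1, esign, epow, eone, echoose]
    simp only [pow_add]
    ring
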